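/- arXiv:1012.2668 — 2 statements merged into one kernel-verified Lean document; each statement's English description precedes it below -/
import Mathlib

section
/- Let p(t, X) be a polynomial in X whose coefficients are real polynomials in a parameter t, monic in X of degree d. Define the discriminant variety V ⊂ ℝ as the set of t where the discriminant of p(t, ·) (with respect to X) vanishes. Then on any connected open subset U of ℝ \ V, the number of distinct real roots of p(t, ·) is constant as t ranges over U. -/
open Polynomial

namespace DiscAux

open Metric Set Classical



/-- Joint continuity of parametric evaluation. -/
lemma cont_ev (r : Polynomial (Polynomial ℝ)) :
    Continuous fun p : ℝ × ℝ => (r.map (Polynomial.evalRingHom p.1)).eval p.2 := by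
  have h : ∀ pr : ℝ × ℝ, (r.map (Polynomial.evalRingHom pr.1)).eval pr.2
      = ∑ i ∈ Finset.range (r.natDegree + 1), (r.coeff i).eval pr.1 * pr.2 ^ i := by
    intro pr
    rw [Polynomial.eval_eq_sum_range' (Nat.lt_succ_of_le (Polynomial.natDegree_map_le (p := r) (f := Polynomial.evalRingHom pr.1)))]
    simp [Polynomial.coeff_map]
  simp only [h]
  exact continuous_finset_sum _ fun i _ =>
    ((r.coeff i).continuous.comp continuous_fst).mul (continuous_snd.pow i)

/-- Root bound for a monic real polynomial. -/
lemma root_bound {p : Polynomial ℝ} (hm : p.Monic) {x : ℝ} (hx : p.IsRoot x) :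
    |x| ≤ 1 + ∑ i ∈ Finset.range p.natDegree, |p.coeff i| := by
  have h := hx.norm_lt_cauchyBound hm.ne_zero
  have hb : cauchyBound p ≤ (∑ i ∈ Finset.range p.natDegree, ‖p.coeff i‖₊) + 1 := by
    rw [Polynomial.cauchyBound, hm.leadingCoeff]
    simp only [nnnorm_one, div_one]
    gcongr
    exact Finset.sup_le fun i hi => Finset.single_le_sum (f := fun j => ‖p.coeff j‖₊) (fun j _ => zero_le) hi
  have h2 : ‖x‖₊ ≤ (∑ i ∈ Finset.range p.natDegree, ‖p.coeff i‖₊) + 1 := (h.le.trans hb)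
  have := (NNReal.coe_le_coe.2 h2)
  push_cast at this
  simpa [Real.norm_eq_abs, add_comm] using this




/-- A continuous nonvanishing function on a preconnected set keeps a constant sign. -/
lemma sign_const {X : Type*} [TopologicalSpace X] {s : Set X} (hs : IsPreconnected s)
    {f : X → ℝ} (hf : ContinuousOn f s) (h0 : ∀ x ∈ s, f x ≠ 0) {a : X} (ha : a ∈ s)
    (hfa : 0 < f a) : ∀ x ∈ s, 0 < f x := by
  intro x hx
  by_contra h
  push_neg at h
  have h0' : (0:ℝ) ∈ Icc (f x) (f a) := ⟨h, hfa.le⟩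
  obtain ⟨y, hy, hy0⟩ := hs.intermediate_value hx ha hf h0'
  exact h0 y hy hy0

/-- IVT from a sign change. -/
lemma ivt_aux {f : ℝ → ℝ} {a b : ℝ} (hab : a ≤ b) (hf : ContinuousOn f (Icc a b))
    (h : f a * f b < 0) : ∃ x ∈ Ioo a b, f x = 0 := by
  rcases mul_neg_iff.1 h with ⟨ha, hb⟩ | ⟨ha, hb⟩
  · obtain ⟨x, hx, hx0⟩ := intermediate_value_Ioo' hab hf (show (0:ℝ) ∈ Ioo (f b) (f a) from ⟨hb, ha⟩)
    exact ⟨x, hx, hx0⟩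
  · obtain ⟨x, hx, hx0⟩ := intermediate_value_Ioo hab hf (show (0:ℝ) ∈ Ioo (f a) (f b) from ⟨ha, hb⟩)
    exact ⟨x, hx, hx0⟩

/-- Local structure of a simple root of a continuously parametrized family:
for parameters near `t0`, there is exactly one root in a small interval around `y`. -/
lemma local_root (F G : ℝ × ℝ → ℝ) (hF : Continuous F) (hG : Continuous G)
    (hFG : ∀ t x : ℝ, HasDerivAt (fun z => F (t, z)) (G (t, x)) x)
    (t0 y : ℝ) (hy : F (t0, y) = 0) (hG0 : G (t0, y) ≠ 0) {ε : ℝ} (hε : 0 < ε) :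
    ∃ η δ : ℝ, 0 < η ∧ η ≤ ε ∧ 0 < δ ∧ ∀ t : ℝ, |t - t0| < δ →
      ((∃ x, |x - y| < η ∧ F (t, x) = 0) ∧
       (∀ x1 x2, |x1 - y| ≤ η → |x2 - y| ≤ η → F (t, x1) = 0 → F (t, x2) = 0 → x1 = x2)) := by
  -- find a rectangle on which G does not vanish
  have hopen : IsOpen {p : ℝ × ℝ | G p ≠ 0} := isOpen_ne.preimage hG
  obtain ⟨ρ, hρ, hball⟩ := Metric.isOpen_iff.1 hopen (t0, y) hG0
  set η : ℝ := min (ρ/2) ε with hηdef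
  have hηpos : 0 < η := lt_min (by linarith) hε
  have hηε : η ≤ ε := min_le_right _ _
  have hηρ : η ≤ ρ/2 := min_le_left _ _
  set R : Set (ℝ × ℝ) := (closedBall t0 (ρ/2)) ×ˢ (closedBall y η) with hRdef
  have hRsub : R ⊆ {p : ℝ × ℝ | G p ≠ 0} := by
    intro p hp
    apply hball
    rcases hp with ⟨h1, h2⟩
    rw [Metric.mem_ball]
    calc dist p (t0, y) = max (dist p.1 t0) (dist p.2 y) := Prod.dist_eq
    _ ≤ ρ/2 := max_le (mem_closedBall.1 h1) ((mem_closedBall.1 h2).trans hηρ)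
    _ < ρ := by linarith
  have hRconn : IsPreconnected R :=
    ((convex_closedBall t0 (ρ/2)).prod (convex_closedBall y η)).isPreconnected
  have hRmem : (t0, y) ∈ R :=
    ⟨mem_closedBall_self (by linarith), mem_closedBall_self hηpos.le⟩
  -- G has constant sign on R; get strict monotonicity of x ↦ F (t, x) on the interval
  have hIcc : closedBall y η = Icc (y - η) (y + η) := Real.closedBall_eq_Icc
  have hmem : ∀ t : ℝ, |t - t0| ≤ ρ/2 → ∀ x ∈ Icc (y - η) (y + η), (t, x) ∈ R := by
    intro t ht x hx
    exact ⟨by rwa [mem_closedBall, Real.dist_eq], by rw [hIcc]; exact hx⟩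
  have hmono : ∀ t : ℝ, |t - t0| ≤ ρ/2 →
      Set.InjOn (fun x => F (t, x)) (Icc (y - η) (y + η)) ∧
      (t = t0 → F (t, y - η) * F (t, y + η) < 0) := by
    have hcont : ∀ t : ℝ, ContinuousOn (fun x => F (t, x)) (Icc (y - η) (y + η)) :=
      fun t => (hF.comp (continuous_const.prodMk continuous_id)).continuousOn
    have hderiv : ∀ t x : ℝ, deriv (fun z => F (t, z)) x = G (t, x) :=
      fun t x => (hFG t x).deriv
    rcases hG0.lt_or_gt with hneg | hpos
    · -- G < 0 on R : strictly decreasing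
      have hsign : ∀ p ∈ R, 0 < -G p := by
        refine sign_const hRconn (hG.neg.continuousOn) (fun p hp => ?_) hRmem (by linarith)
        simpa using hRsub hp
      intro t ht
      have hanti : StrictAntiOn (fun x => F (t, x)) (Icc (y - η) (y + η)) := by
        apply strictAntiOn_of_deriv_neg (convex_Icc _ _) (hcont t)
        intro x hx
        rw [hderiv]
        have := hsign (t, x) (hmem t ht x (interior_subset hx))
        linarith
      refine ⟨hanti.injOn, fun hteq => ?_⟩
      subst hteq
      have h1 : F (t, y) = 0 := hy
      have hy1 : y - η ∈ Icc (y - η) (y + η) := by constructor <;> linarith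
      have hy2 : y ∈ Icc (y - η) (y + η) := by constructor <;> linarith
      have hy3 : y + η ∈ Icc (y - η) (y + η) := by constructor <;> linarith
      have l1 := hanti hy1 hy2 (by linarith)
      have l2 := hanti hy2 hy3 (by linarith)
      simp only at l1 l2
      nlinarith [l1, l2]
    · have hsign : ∀ p ∈ R, 0 < G p := by
        refine sign_const hRconn hG.continuousOn (fun p hp => hRsub hp) hRmem hpos
      intro t ht
      have hmono : StrictMonoOn (fun x => F (t, x)) (Icc (y - η) (y + η)) := by
        apply strictMonoOn_of_deriv_pos (convex_Icc _ _) (hcont t)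
        intro x hx
        rw [hderiv]
        exact hsign (t, x) (hmem t ht x (interior_subset hx))
      refine ⟨hmono.injOn, fun hteq => ?_⟩
      subst hteq
      have hy1 : y - η ∈ Icc (y - η) (y + η) := by constructor <;> linarith
      have hy2 : y ∈ Icc (y - η) (y + η) := by constructor <;> linarith
      have hy3 : y + η ∈ Icc (y - η) (y + η) := by constructor <;> linarith
      have l1 := hmono hy1 hy2 (by linarith)
      have l2 := hmono hy2 hy3 (by linarith)
      simp only at l1 l2
      rw [hy] at l1 l2
      nlinarith [l1, l2]
  -- the sign change persists for t near t0
  have hprod : Continuous fun t : ℝ => F (t, y - η) * F (t, y + η) :=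
    ((hF.comp (continuous_id.prodMk continuous_const)).mul
      (hF.comp (continuous_id.prodMk continuous_const)))
  have hp0 : F (t0, y - η) * F (t0, y + η) < 0 := (hmono t0 (by simp [abs_nonneg]; linarith)).2 rfl
  have hopen2 : IsOpen {t : ℝ | F (t, y - η) * F (t, y + η) < 0} :=
    isOpen_lt hprod continuous_const
  obtain ⟨δ1, hδ1, hball1⟩ := Metric.isOpen_iff.1 hopen2 t0 hp0
  refine ⟨η, min δ1 (ρ/2), hηpos, hηε, lt_min hδ1 (by linarith), fun t ht => ?_⟩
  have ht1 : |t - t0| < δ1 := lt_of_lt_of_le ht (min_le_left _ _)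
  have ht2 : |t - t0| ≤ ρ/2 := le_of_lt (lt_of_lt_of_le ht (min_le_right _ _))
  constructor
  · have hsc : F (t, y - η) * F (t, y + η) < 0 := hball1 (by rwa [mem_ball, Real.dist_eq])
    obtain ⟨x, hx, hx0⟩ := ivt_aux (by linarith)
      ((hF.comp (continuous_const.prodMk continuous_id)).continuousOn) hsc
    refine ⟨x, ?_, hx0⟩
    rw [abs_lt]; constructor <;> [linarith [hx.1]; linarith [hx.2]]
  · intro x1 x2 h1 h2 hx1 hx2
    have m1 : x1 ∈ Icc (y - η) (y + η) := by rw [← hIcc]; rwa [mem_closedBall, Real.dist_eq]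
    have m2 : x2 ∈ Icc (y - η) (y + η) := by rw [← hIcc]; rwa [mem_closedBall, Real.dist_eq]
    exact (hmono t ht2).1 m1 m2 (by simp only; rw [hx1, hx2])




/-- Roots of nearby members of the family are near roots of `F (t0, ·)`. -/
lemma usc (F : ℝ × ℝ → ℝ) (hF : Continuous F) (M : ℝ) (t0 : ℝ)
    (hM : ∀ t x : ℝ, |t - t0| ≤ 1 → F (t, x) = 0 → |x| ≤ M)
    {ε : ℝ} (hε : 0 < ε) :
    ∃ δ > 0, ∀ t x : ℝ, |t - t0| < δ → F (t, x) = 0 →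
      ∃ y, F (t0, y) = 0 ∧ |x - y| < ε := by
  set K : Set (ℝ × ℝ) := Icc (t0 - 1) (t0 + 1) ×ˢ Icc (-M) M with hK
  have hKcomp : IsCompact K := (isCompact_Icc).prod isCompact_Icc
  set C : Set (ℝ × ℝ) :=
    K ∩ (F ⁻¹' {0} ∩ {p : ℝ × ℝ | ∀ y : ℝ, F (t0, y) = 0 → ε ≤ |p.2 - y|}) with hC
  have hclosed : IsClosed (F ⁻¹' {0} ∩ {p : ℝ × ℝ | ∀ y : ℝ, F (t0, y) = 0 → ε ≤ |p.2 - y|}) := by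
    apply IsClosed.inter (isClosed_singleton.preimage hF)
    have : {p : ℝ × ℝ | ∀ y : ℝ, F (t0, y) = 0 → ε ≤ |p.2 - y|}
        = ⋂ (y : ℝ) (_ : F (t0, y) = 0), {p : ℝ × ℝ | ε ≤ |p.2 - y|} := by
      ext p; simp [Set.mem_iInter]
    rw [this]
    refine isClosed_iInter fun y => isClosed_iInter fun _ => ?_
    have : Continuous fun p : ℝ × ℝ => |p.2 - y| := (continuous_snd.sub continuous_const).abs
    exact isClosed_le continuous_const this
  have hCcomp : IsCompact C := hKcomp.inter_right hclosed
  have hDcomp : IsCompact (Prod.fst '' C) := hCcomp.image continuous_fst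
  have ht0 : t0 ∉ Prod.fst '' C := by
    rintro ⟨⟨t, x⟩, ⟨_, hroot, hfar⟩, rfl⟩
    have := hfar x hroot
    simp at this; linarith
  have : IsOpen (Prod.fst '' C)ᶜ := hDcomp.isClosed.isOpen_compl
  obtain ⟨δ0, hδ0, hball⟩ := Metric.isOpen_iff.1 this t0 ht0
  refine ⟨min δ0 1, lt_min hδ0 one_pos, fun t x ht hroot => ?_⟩
  have ht1 : |t - t0| ≤ 1 := le_of_lt (lt_of_lt_of_le ht (min_le_right _ _))
  have hx : |x| ≤ M := hM t x ht1 hroot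
  by_contra hcon
  push_neg at hcon
  have hmemC : (t, x) ∈ C := by
    refine ⟨⟨?_, ?_⟩, hroot, fun y hy => hcon y hy⟩
    · rw [mem_Icc]; rw [abs_le] at ht1; constructor <;> linarith [ht1.1, ht1.2]
    · rw [mem_Icc]; rw [abs_le] at hx; exact hx
  have : t ∈ (Prod.fst '' C)ᶜ :=
    hball (by rw [mem_ball, Real.dist_eq]; exact lt_of_lt_of_le ht (min_le_left _ _))
  exact this ⟨(t, x), hmemC, rfl⟩




noncomputable section

lemma key_local (q : Polynomial (Polynomial ℝ)) (d : ℕ) (hd : 1 ≤ d)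
    (hmonic : q.Monic) (hdeg : q.natDegree = d)
    (U : Set ℝ)
    (hsimple : ∀ t ∈ U, ∀ y : ℝ, (q.map (evalRingHom t)).eval y = 0 →
      ((derivative q).map (evalRingHom t)).eval y ≠ 0)
    (t0 : ℝ) :
    ∃ δ : ℝ, 0 < δ ∧ (t0 ∈ U → ∀ t : ℝ, |t - t0| < δ →
      (q.map (evalRingHom t)).roots.toFinset.card =
      (q.map (evalRingHom t0)).roots.toFinset.card) := by
  by_cases ht0 : t0 ∈ U
  swap
  · exact ⟨1, one_pos, fun h => absurd h ht0⟩
  set F : ℝ × ℝ → ℝ := fun p => (q.map (evalRingHom p.1)).eval p.2 with hFdef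
  set G : ℝ × ℝ → ℝ := fun p => ((derivative q).map (evalRingHom p.1)).eval p.2 with hGdef
  have hF : Continuous F := cont_ev q
  have hG : Continuous G := cont_ev (derivative q)
  have hPmonic : ∀ t : ℝ, (q.map (evalRingHom t)).Monic := fun t => hmonic.map _
  have hPnd : ∀ t : ℝ, (q.map (evalRingHom t)).natDegree = d := fun t => by
    rw [hmonic.natDegree_map, hdeg]
  have hFG : ∀ t x : ℝ, HasDerivAt (fun z => F (t, z)) (G (t, x)) x := by
    intro t x
    have := (q.map (evalRingHom t)).hasDerivAt x
    simpa [hFdef, hGdef, Polynomial.derivative_map] using this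
  -- the uniform root bound
  have hBcont : Continuous fun t : ℝ => 1 + ∑ i ∈ Finset.range d, |(q.coeff i).eval t| :=
    continuous_const.add (continuous_finset_sum _ fun i _ => ((q.coeff i).continuous).abs)
  obtain ⟨tm, _, htm⟩ := (isCompact_Icc (a := t0 - 1) (b := t0 + 1)).exists_isMaxOn
    (Set.nonempty_Icc.2 (by linarith : t0 - 1 ≤ t0 + 1)) hBcont.continuousOn
  set M : ℝ := 1 + ∑ i ∈ Finset.range d, |(q.coeff i).eval tm| with hMdef
  have hM : ∀ t x : ℝ, |t - t0| ≤ 1 → F (t, x) = 0 → |x| ≤ M := by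
    intro t x ht hx
    have h1 : |x| ≤ 1 + ∑ i ∈ Finset.range d, |(q.coeff i).eval t| := by
      have := root_bound (hPmonic t) (x := x) hx
      rw [hPnd t] at this
      convert this using 3 with i
      simp [Polynomial.coeff_map]
    refine h1.trans ?_
    have : t ∈ Icc (t0 - 1) (t0 + 1) := by
      rw [mem_Icc]; rw [abs_le] at ht; constructor <;> linarith [ht.1, ht.2]
    exact (isMaxOn_iff.1 htm) t this
  -- the roots of the central polynomial
  set S : Finset ℝ := (q.map (evalRingHom t0)).roots.toFinset with hSdef
  have hS : ∀ y : ℝ, y ∈ S ↔ F (t0, y) = 0 := by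
    intro y
    rw [hSdef, Multiset.mem_toFinset, Polynomial.mem_roots (hPmonic t0).ne_zero]
    rfl
  -- separation of the roots
  set T : Finset ℝ := ((S ×ˢ S).filter fun p => p.1 ≠ p.2).image fun p => |p.1 - p.2| with hTdef
  set ε0 : ℝ := if hT : T.Nonempty then T.min' hT else 1 with hε0def
  have hε0pos : 0 < ε0 := by
    rw [hε0def]
    split_ifs with hT
    · obtain ⟨⟨a, b⟩, hab, habs⟩ := Finset.mem_image.1 (T.min'_mem hT)
      rw [Finset.mem_filter] at hab
      rw [← habs]
      exact abs_pos.2 (sub_ne_zero.2 hab.2)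
    · exact one_pos
  have hsep : ∀ a ∈ S, ∀ b ∈ S, a ≠ b → ε0 ≤ |a - b| := by
    intro a ha b hb hab
    have hmem : |a - b| ∈ T := Finset.mem_image.2
      ⟨(a, b), Finset.mem_filter.2 ⟨Finset.mem_product.2 ⟨ha, hb⟩, hab⟩, rfl⟩
    rw [hε0def]
    split_ifs with hT
    · exact T.min'_le _ hmem
    · exact absurd ⟨_, hmem⟩ hT
  -- local root data around each central root
  have hroot : ∀ y : ℝ, ∃ ηδ : ℝ × ℝ, 0 < ηδ.1 ∧ 0 < ηδ.2 ∧ (y ∈ S →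
      ηδ.1 ≤ ε0 / 3 ∧ ∀ t : ℝ, |t - t0| < ηδ.2 →
        (∃ x, |x - y| < ηδ.1 ∧ F (t, x) = 0) ∧
        (∀ x1 x2, |x1 - y| ≤ ηδ.1 → |x2 - y| ≤ ηδ.1 →
          F (t, x1) = 0 → F (t, x2) = 0 → x1 = x2)) := by
    intro y
    by_cases hy : y ∈ S
    · obtain ⟨η, δ, hη, hηε, hδ, hprop⟩ := local_root F G hF hG hFG t0 y ((hS y).1 hy)
        (hsimple t0 ht0 y ((hS y).1 hy)) (ε := ε0 / 3) (by positivity)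
      exact ⟨(η, δ), hη, hδ, fun _ => ⟨hηε, hprop⟩⟩
    · exact ⟨(1, 1), one_pos, one_pos, fun h => absurd h hy⟩
  choose ηδ hη hδr hprop using hroot
  -- uniform radii
  set εS : ℝ := if hSne : S.Nonempty then S.inf' hSne (fun y => (ηδ y).1) else 1 with hεSdef
  have hεSpos : 0 < εS := by
    rw [hεSdef]; split_ifs with hSne
    · obtain ⟨y, _, hy⟩ := S.exists_mem_eq_inf' hSne (fun y => (ηδ y).1)
      rw [hy]; exact hη y
    · exact one_pos
  have hεS_le : ∀ y ∈ S, εS ≤ (ηδ y).1 := by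
    intro y hy
    rw [hεSdef]
    split_ifs with hSne
    · exact Finset.inf'_le _ hy
    · exact absurd ⟨y, hy⟩ hSne
  set δS : ℝ := if hSne : S.Nonempty then S.inf' hSne (fun y => (ηδ y).2) else 1 with hδSdef
  have hδSpos : 0 < δS := by
    rw [hδSdef]; split_ifs with hSne
    · obtain ⟨y, _, hy⟩ := S.exists_mem_eq_inf' hSne (fun y => (ηδ y).2)
      rw [hy]; exact hδr y
    · exact one_pos
  have hδS_le : ∀ y ∈ S, δS ≤ (ηδ y).2 := by
    intro y hy
    rw [hδSdef]
    split_ifs with hSne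
    · exact Finset.inf'_le _ hy
    · exact absurd ⟨y, hy⟩ hSne
  obtain ⟨δu, hδu, husc⟩ := usc F hF M t0 hM hεSpos
  refine ⟨min δS δu, lt_min hδSpos hδu, fun _ t ht => ?_⟩
  have htS : |t - t0| < δS := lt_of_lt_of_le ht (min_le_left _ _)
  have htu : |t - t0| < δu := lt_of_lt_of_le ht (min_le_right _ _)
  set St : Finset ℝ := (q.map (evalRingHom t)).roots.toFinset with hStdef
  have hSt : ∀ y : ℝ, y ∈ St ↔ F (t, y) = 0 := by
    intro y
    rw [hStdef, Multiset.mem_toFinset, Polynomial.mem_roots (hPmonic t).ne_zero]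
    rfl
  have hcard1 : S.card ≤ St.card := by
    set f : ℝ → ℝ := fun y =>
      if h : ∃ x, |x - y| < (ηδ y).1 ∧ F (t, x) = 0 then h.choose else 0 with hfdef
    have hex : ∀ y ∈ S, ∃ x, |x - y| < (ηδ y).1 ∧ F (t, x) = 0 := fun y hy =>
      ((hprop y hy).2 t (lt_of_lt_of_le htS (hδS_le y hy))).1
    have hspec : ∀ y ∈ S, |f y - y| < (ηδ y).1 ∧ F (t, f y) = 0 := by
      intro y hy
      rw [hfdef]
      simp only [dif_pos (hex y hy)]
      exact (hex y hy).choose_spec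
    apply Finset.card_le_card_of_injOn f
    · intro y hy
      exact (hSt _).2 (hspec y hy).2
    · intro y1 hy1 y2 hy2 hfeq
      by_contra hne
      have h1 := (hspec y1 hy1).1
      have h2 := (hspec y2 hy2).1
      have hη1 := (hprop y1 hy1).1
      have hη2 := (hprop y2 hy2).1
      have htri : |y1 - y2| ≤ |y1 - f y1| + |f y2 - y2| := by
        rw [hfeq]; exact abs_sub_le _ _ _
      rw [abs_sub_comm y1 (f y1)] at htri
      have := hsep y1 hy1 y2 hy2 hne
      linarith
  have hcard2 : St.card ≤ S.card := by
    set g : ℝ → ℝ := fun x =>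
      if h : ∃ y, F (t0, y) = 0 ∧ |x - y| < εS then h.choose else 0 with hgdef
    have hex : ∀ x ∈ St, ∃ y, F (t0, y) = 0 ∧ |x - y| < εS := fun x hx =>
      husc t x htu ((hSt x).1 hx)
    have hspec : ∀ x ∈ St, F (t0, g x) = 0 ∧ |x - g x| < εS := by
      intro x hx
      rw [hgdef]
      simp only [dif_pos (hex x hx)]
      exact (hex x hx).choose_spec
    apply Finset.card_le_card_of_injOn g
    · intro x hx
      exact (hS _).2 (hspec x hx).1
    · intro x1 hx1 x2 hx2 hgeq
      have h1 := hspec x1 hx1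
      have h2 := hspec x2 hx2
      have hyS : g x1 ∈ S := (hS _).2 h1.1
      have hδy : |t - t0| < (ηδ (g x1)).2 := lt_of_lt_of_le htS (hδS_le _ hyS)
      refine ((hprop _ hyS).2 t hδy).2 x1 x2 ?_ ?_ ((hSt x1).1 hx1) ((hSt x2).1 hx2)
      · exact le_of_lt (lt_of_lt_of_le h1.2 (hεS_le _ hyS))
      · rw [← hgeq] at h2
        exact le_of_lt (lt_of_lt_of_le h2.2 (hεS_le _ hyS))
  exact le_antisymm hcard2 hcard1

end
end DiscAux

/-- For a parametric monic polynomial `q ∈ ℝ[t][X]`, on any connected open set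
of parameters avoiding the discriminant variety (the set of parameters where
`q(t, ·)` has a multiple complex root, i.e. where the discriminant vanishes),
the number of distinct real roots of `q(t, ·)` is constant. -/


theorem constant_real_root_count_off_discriminant_variety
    (q : Polynomial (Polynomial ℝ)) (d : ℕ) (hd : 1 ≤ d)
    (hmonic : q.Monic) (hdeg : q.natDegree = d)
    (V : Set ℝ)
    (hV : V = {t : ℝ | ∃ z : ℂ,
      2 ≤ ((q.map (Polynomial.evalRingHom t)).map (algebraMap ℝ ℂ)).rootMultiplicity z})
    (U : Set ℝ) (hUopen : IsOpen U) (hUconn : IsConnected U)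
    (hUV : U ⊆ Vᶜ) :
    ∀ t₁ ∈ U, ∀ t₂ ∈ U,
      (q.map (Polynomial.evalRingHom t₁)).roots.toFinset.card =
      (q.map (Polynomial.evalRingHom t₂)).roots.toFinset.card := by
  have hPmonic : ∀ t : ℝ, (q.map (evalRingHom t)).Monic := fun t => hmonic.map _
  -- simple roots off the discriminant variety
  have hsimple : ∀ t ∈ U, ∀ y : ℝ, (q.map (evalRingHom t)).eval y = 0 →
      ((derivative q).map (evalRingHom t)).eval y ≠ 0 := by
    intro t ht y hy hder
    have hroot : (q.map (evalRingHom t)).IsRoot y := hy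
    have hroot' : (derivative (q.map (evalRingHom t))).IsRoot y := by
      rw [Polynomial.derivative_map]; exact hder
    have h1 : 1 < (q.map (evalRingHom t)).rootMultiplicity y :=
      (Polynomial.one_lt_rootMultiplicity_iff_isRoot (hPmonic t).ne_zero).2 ⟨hroot, hroot'⟩
    have h2 : ((q.map (evalRingHom t)).map (algebraMap ℝ ℂ)).rootMultiplicity
        ((algebraMap ℝ ℂ) y) = (q.map (evalRingHom t)).rootMultiplicity y :=
      (Polynomial.eq_rootMultiplicity_map (algebraMap ℝ ℂ).injective y).symm
    have : t ∈ V := by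
      rw [hV]
      exact ⟨(algebraMap ℝ ℂ) y, by rw [h2]; omega⟩
    exact hUV ht this
  have key := fun t0 => DiscAux.key_local q d hd hmonic hdeg U hsimple t0
  choose δ hδpos hδ using key
  intro t₁ ht₁ t₂ ht₂
  set cnt : ℝ → ℕ := fun t => (q.map (evalRingHom t)).roots.toFinset.card with hcnt
  show cnt t₁ = cnt t₂
  by_contra hne
  set A : Set ℝ := ⋃ (t0 : ℝ) (_ : t0 ∈ U ∧ cnt t0 = cnt t₁), Metric.ball t0 (δ t0) with hA
  set B : Set ℝ := ⋃ (t0 : ℝ) (_ : t0 ∈ U ∧ cnt t0 ≠ cnt t₁), Metric.ball t0 (δ t0) with hB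
  have hAopen : IsOpen A := isOpen_iUnion fun _ => isOpen_iUnion fun _ => Metric.isOpen_ball
  have hBopen : IsOpen B := isOpen_iUnion fun _ => isOpen_iUnion fun _ => Metric.isOpen_ball
  have hsub : U ⊆ A ∪ B := by
    intro t ht
    by_cases h : cnt t = cnt t₁
    · exact Or.inl (Set.mem_iUnion.2 ⟨t, Set.mem_iUnion.2 ⟨⟨ht, h⟩, Metric.mem_ball_self (hδpos t)⟩⟩)
    · exact Or.inr (Set.mem_iUnion.2 ⟨t, Set.mem_iUnion.2 ⟨⟨ht, h⟩, Metric.mem_ball_self (hδpos t)⟩⟩)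
  have hAne : (U ∩ A).Nonempty :=
    ⟨t₁, ht₁, Set.mem_iUnion.2 ⟨t₁, Set.mem_iUnion.2 ⟨⟨ht₁, rfl⟩, Metric.mem_ball_self (hδpos t₁)⟩⟩⟩
  have hBne : (U ∩ B).Nonempty :=
    ⟨t₂, ht₂, Set.mem_iUnion.2 ⟨t₂, Set.mem_iUnion.2 ⟨⟨ht₂, fun h => hne h.symm⟩,
      Metric.mem_ball_self (hδpos t₂)⟩⟩⟩
  obtain ⟨u, _, huA, huB⟩ := hUconn.isPreconnected A B hAopen hBopen hsub hAne hBne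
  obtain ⟨a, haU⟩ := Set.mem_iUnion.1 huA
  obtain ⟨⟨haU', haeq⟩, hab⟩ := Set.mem_iUnion.1 haU
  obtain ⟨b, hbU⟩ := Set.mem_iUnion.1 huB
  obtain ⟨⟨hbU', hbne⟩, hbb⟩ := Set.mem_iUnion.1 hbU
  have h1 : cnt u = cnt a := hδ a haU' u (by rwa [← Real.dist_eq, ← Metric.mem_ball])
  have h2 : cnt u = cnt b := hδ b hbU' u (by rwa [← Real.dist_eq, ← Metric.mem_ball])
  exact hbne (by rw [← h2, h1, haeq])
end

section
/- If p(t, X) is monic in X of degree d with coefficients polynomial in t ∈ ℝ, and t₀ is a parameter value at which all d complex roots of p(t₀, ·) are simple, then there is a neighborhood of t₀ on which the number of real roots of p(t, ·) is constant. -/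
open Polynomial Filter

lemma aux_norm_multiset_prod (s : Multiset ℂ) : ‖s.prod‖ = (s.map fun z => ‖z‖).prod := by
  induction s using Multiset.induction with
  | empty => simp
  | cons a s ih => simp [norm_mul, ih]

lemma aux_pow_card_le_prod (s : Multiset ℂ) (f : ℂ → ℝ) (c : ℝ) (hc : 0 ≤ c)
    (h : ∀ z ∈ s, c ≤ f z) : c ^ (Multiset.card s) ≤ (s.map f).prod := by
  induction s using Multiset.induction with
  | empty => simp
  | cons a s ih =>
    simp only [Multiset.map_cons, Multiset.prod_cons, Multiset.card_cons, pow_succ']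
    exact mul_le_mul (h a (Multiset.mem_cons_self a s))
      (ih fun z hz => h z (Multiset.mem_cons_of_mem hz)) (pow_nonneg hc _)
      (hc.trans (h a (Multiset.mem_cons_self a s)))

lemma aux_root_bound (f : Polynomial ℂ) (hf : f.Monic) (z : ℂ) (hz : f.eval z = 0) :
    ‖z‖ ≤ 1 + ∑ i ∈ Finset.range f.natDegree, ‖f.coeff i‖ := by
  set n := f.natDegree with hn
  have hs0 : (0:ℝ) ≤ ∑ i ∈ Finset.range n, ‖f.coeff i‖ :=
    Finset.sum_nonneg fun i _ => norm_nonneg _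
  rcases le_or_gt ‖z‖ 1 with h1 | h1
  · linarith
  have hn1 : 1 ≤ n := by
    by_contra hc
    push_neg at hc
    interval_cases n
    · have : f = 1 := hf.natDegree_eq_zero.mp hn.symm
      rw [this] at hz; simp at hz
  have hev : f.eval z = ∑ i ∈ Finset.range (n+1), f.coeff i * z ^ i :=
    eval_eq_sum_range' (by omega) z
  rw [Finset.sum_range_succ] at hev
  have hlead : f.coeff n = 1 := hf.coeff_natDegree
  rw [hz, hlead, one_mul] at hev
  have hzn : ‖z ^ n‖ = ‖∑ i ∈ Finset.range n, f.coeff i * z ^ i‖ := by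
    have : z ^ n = -∑ i ∈ Finset.range n, f.coeff i * z ^ i := by
      rw [eq_neg_iff_add_eq_zero]; linear_combination -hev
    rw [this, norm_neg]
  have hb : ‖∑ i ∈ Finset.range n, f.coeff i * z ^ i‖ ≤
      (∑ i ∈ Finset.range n, ‖f.coeff i‖) * ‖z‖ ^ (n-1) := by
    calc ‖∑ i ∈ Finset.range n, f.coeff i * z ^ i‖
        ≤ ∑ i ∈ Finset.range n, ‖f.coeff i * z ^ i‖ := norm_sum_le _ _
      _ ≤ ∑ i ∈ Finset.range n, ‖f.coeff i‖ * ‖z‖ ^ (n-1) := by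
          apply Finset.sum_le_sum
          intro i hi
          rw [norm_mul, norm_pow]
          exact mul_le_mul_of_nonneg_left
            (pow_le_pow_right₀ h1.le (by have := Finset.mem_range.mp hi; omega))
            (norm_nonneg _)
      _ = (∑ i ∈ Finset.range n, ‖f.coeff i‖) * ‖z‖ ^ (n-1) := by
          rw [Finset.sum_mul]
  have hzpow : ‖z‖ ^ n = ‖z‖ ^ (n-1) * ‖z‖ := by
    rw [← pow_succ]; congr 1; omega
  have hpos : (0:ℝ) < ‖z‖ ^ (n-1) := pow_pos (by linarith) _
  have : ‖z‖ ^ (n-1) * ‖z‖ ≤ (∑ i ∈ Finset.range n, ‖f.coeff i‖) * ‖z‖ ^ (n-1) := by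
    rw [← hzpow, ← norm_pow, hzn]; exact hb
  nlinarith

lemma aux_exists_root_of_sign {f : ℝ → ℝ} (hf : Continuous f) {a b : ℝ} (hab : a ≤ b)
    (h : f a * f b < 0) : ∃ y ∈ Set.Icc a b, f y = 0 := by
  rcases lt_trichotomy (f a) 0 with ha | ha | ha
  · have hb : 0 < f b := by nlinarith
    obtain ⟨y, hy, hy0⟩ := intermediate_value_Icc hab hf.continuousOn ⟨ha.le, hb.le⟩
    exact ⟨y, hy, hy0⟩
  · rw [ha] at h; simp at h
  · have hb : f b < 0 := by nlinarith
    obtain ⟨y, hy, hy0⟩ := intermediate_value_Icc' hab hf.continuousOn ⟨hb.le, ha.le⟩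
    exact ⟨y, hy, hy0⟩

lemma aux_sign_persist {x a y b : ℝ} (hx : |x - a| < |a|) (hy : |y - b| < |b|)
    (hab : a * b < 0) : x * y < 0 := by
  have hxa := abs_lt.mp hx
  have hya := abs_lt.mp hy
  rcases lt_trichotomy a 0 with h | h | h
  · rw [abs_of_neg h] at hxa
    have hx0 : x < 0 := by linarith [hxa.2]
    have hb : 0 < b := by nlinarith
    rw [abs_of_pos hb] at hya
    have hy0 : 0 < y := by linarith [hya.1]
    exact mul_neg_of_neg_of_pos hx0 hy0
  · rw [h] at hab; simp at hab
  · rw [abs_of_pos h] at hxa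
    have hx0 : 0 < x := by linarith [hxa.1]
    have hb : b < 0 := by nlinarith
    rw [abs_of_neg hb] at hya
    have hy0 : y < 0 := by linarith [hya.2]
    exact mul_neg_of_pos_of_neg hx0 hy0

lemma aux_eval_c (p : Polynomial ℝ) (x : ℝ) :
    (p.map (algebraMap ℝ ℂ)).eval (x:ℂ) = ((p.eval x : ℝ) : ℂ) := by
  have : ((x:ℂ)) = algebraMap ℝ ℂ x := rfl
  rw [this, eval_map, eval₂_at_apply]; rfl

lemma aux_coeff_c (p : Polynomial ℝ) (i : ℕ) :
    ‖(p.map (algebraMap ℝ ℂ)).coeff i‖ = |p.coeff i| := by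
  simp [coeff_map, Complex.norm_real]


lemma aux_eval_param (q : Polynomial (Polynomial ℝ)) (t a : ℝ) :
    (q.map (evalRingHom t)).eval a = ((q.eval (C a)).eval t) := by
  rw [eval_map]
  have h := hom_eval₂ q (RingHom.id (Polynomial ℝ)) (evalRingHom t) (C a)
  have h2 : q.eval₂ (RingHom.id _) (C a) = q.eval (C a) := rfl
  rw [h2, RingHom.comp_id, coe_evalRingHom, eval_C] at h
  exact h.symm

theorem aux_main (P : ℝ → Polynomial ℝ) (d : ℕ) (hd : 1 ≤ d)
    (hPm : ∀ t, (P t).Monic) (hPd : ∀ t, (P t).natDegree = d)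
    (hcoeff : ∀ i, Continuous fun t => (P t).coeff i)
    (hevalcont : ∀ a : ℝ, Continuous fun t => (P t).eval a) (t₀ : ℝ)
    (hsimple : ∀ z : ℂ, ((P t₀).map (algebraMap ℝ ℂ)).rootMultiplicity z ≤ 1) :
    ∀ᶠ t in nhds t₀, (P t).roots.toFinset.card = (P t₀).roots.toFinset.card := by
  classical
  set Pc : ℝ → Polynomial ℂ := fun t => (P t).map (algebraMap ℝ ℂ) with hPc
  have Pne : ∀ t, P t ≠ 0 := fun t => (hPm t).ne_zero
  have Pcm : ∀ t, (Pc t).Monic := fun t => (hPm t).map _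
  have Pcd : ∀ t, (Pc t).natDegree = d := fun t => ((hPm t).natDegree_map _).trans (hPd t)
  have Pcne : ∀ t, Pc t ≠ 0 := fun t => (Pcm t).ne_zero
  have RtC : ∀ t, Multiset.card ((Pc t).roots) = d := fun t => by
    rw [← Pcd t]
    exact IsAlgClosed.card_roots_eq_natDegree
  have EP : ∀ (t : ℝ) (w : ℂ),
      ‖(Pc t).eval w‖ = (((Pc t).roots).map fun r => ‖w - r‖).prod := by
    intro t w
    conv_lhs => rw [← C_leadingCoeff_mul_prod_multiset_X_sub_C (p := Pc t) (by rw [RtC t, Pcd t])]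
    rw [(Pcm t).leadingCoeff, map_one, one_mul, eval_multiset_prod, Multiset.map_map,
      aux_norm_multiset_prod, Multiset.map_map]
    congr 1
    refine Multiset.map_congr rfl fun r _ => ?_
    simp [Function.comp]
  -- the roots of `Pc t₀`, without multiplicity
  have hNod : ((Pc t₀).roots).Nodup := Multiset.nodup_iff_count_le_one.mpr fun z => by
    rw [count_roots]; exact hsimple z
  set S : Finset ℂ := (Pc t₀).roots.toFinset with hS
  have hScard : S.card = d := by
    rw [hS, Multiset.toFinset_card_eq_card_iff_nodup.mpr hNod, RtC t₀]
  have memS : ∀ z : ℂ, z ∈ S ↔ (Pc t₀).eval z = 0 := fun z => by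
    rw [hS, Multiset.mem_toFinset, mem_roots (Pcne t₀)]; rfl
  -- choice of ε
  obtain ⟨ε, hε, hsep, him⟩ : ∃ ε > 0,
      (∀ r ∈ S, ∀ s ∈ S, r ≠ s → 3 * ε < ‖r - s‖) ∧
      (∀ r ∈ S, r.im ≠ 0 → ε < |r.im|) := by
    set F : Finset ℝ :=
      (((S ×ˢ S).filter fun p : ℂ × ℂ => p.1 ≠ p.2).image fun p => ‖p.1 - p.2‖ / 4) ∪
      ((S.filter fun r => r.im ≠ 0).image fun r => |r.im| / 2) ∪ {1} with hF
    have h1F : (1:ℝ) ∈ F := by simp [hF]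
    have hFne : F.Nonempty := ⟨1, h1F⟩
    refine ⟨F.min' hFne, ?_, ?_, ?_⟩
    · refine (Finset.lt_min'_iff _ _).mpr ?_
      intro y hy
      simp only [hF, Finset.mem_union, Finset.mem_image, Finset.mem_filter,
        Finset.mem_singleton, Finset.mem_product] at hy
      rcases hy with (⟨p, ⟨_, hne⟩, rfl⟩ | ⟨r, ⟨_, hr⟩, rfl⟩) | rfl
      · have : p.1 - p.2 ≠ 0 := sub_ne_zero.mpr hne
        have := norm_pos_iff.mpr this
        linarith
      · have : 0 < |r.im| := abs_pos.mpr hr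
        linarith
      · norm_num
    · intro r hr s hs hrs
      have hmem : ‖r - s‖ / 4 ∈ F := by
        simp only [hF, Finset.mem_union, Finset.mem_image, Finset.mem_filter,
          Finset.mem_product]
        exact Or.inl (Or.inl ⟨(r, s), ⟨⟨hr, hs⟩, hrs⟩, rfl⟩)
      have h1 := F.min'_le _ hmem
      have : (0:ℝ) < ‖r - s‖ := norm_pos_iff.mpr (sub_ne_zero.mpr hrs)
      linarith
    · intro r hr hr0
      have hmem : |r.im| / 2 ∈ F := by
        simp only [hF, Finset.mem_union, Finset.mem_image, Finset.mem_filter]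
        exact Or.inl (Or.inr ⟨r, ⟨hr, hr0⟩, rfl⟩)
      have h1 := F.min'_le _ hmem
      have : 0 < |r.im| := abs_pos.mpr hr0
      linarith
  -- uniform bound on roots for t near t₀
  set cb : ℝ → ℝ := fun t => ∑ i ∈ Finset.range d, |(P t).coeff i| with hcb
  have hcbc : Continuous cb := continuous_finset_sum _ fun i _ => (hcoeff i).abs
  have hcb0 : ∀ t, 0 ≤ cb t := fun t => Finset.sum_nonneg fun i _ => abs_nonneg _
  obtain ⟨u, hu, humax⟩ := (isCompact_Icc (a := t₀ - 1) (b := t₀ + 1)).exists_isMaxOn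
    ⟨t₀, by constructor <;> linarith⟩ hcbc.continuousOn
  set B : ℝ := 1 + cb u with hB
  have hB1 : 1 ≤ B := by have := hcb0 u; rw [hB]; linarith
  have hBroot : ∀ t, |t - t₀| ≤ 1 → ∀ z ∈ (Pc t).roots, ‖z‖ ≤ B := by
    intro t ht z hz
    have hz0 : (Pc t).eval z = 0 := (mem_roots (Pcne t)).mp hz
    have h1 := aux_root_bound (Pc t) (Pcm t) z hz0
    rw [Pcd t] at h1
    have hco : ∑ i ∈ Finset.range d, ‖(Pc t).coeff i‖ = cb t :=
      Finset.sum_congr rfl fun i _ => aux_coeff_c (P t) i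
    rw [hco] at h1
    have ht' : t ∈ Set.Icc (t₀ - 1) (t₀ + 1) := by
      rw [Set.mem_Icc]; rw [abs_le] at ht; constructor <;> linarith
    have h2 := isMaxOn_iff.mp humax t ht'
    rw [hB]; linarith
  have hEvalDiff : ∀ t : ℝ,
      (∑ i ∈ Finset.range d, |(P t).coeff i - (P t₀).coeff i| * B ^ i) < ε ^ d →
      ∀ w : ℂ, ‖w‖ ≤ B → ‖(Pc t).eval w - (Pc t₀).eval w‖ < ε ^ d := by
    intro t hsum w hw
    have hDco : ∀ i, ‖(Pc t - Pc t₀).coeff i‖ = |(P t).coeff i - (P t₀).coeff i| := by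
      intro i
      show ‖((P t).map (algebraMap ℝ ℂ) - (P t₀).map (algebraMap ℝ ℂ)).coeff i‖ = _
      rw [coeff_sub, coeff_map, coeff_map, ← map_sub, norm_algebraMap', Real.norm_eq_abs]
    have hDdeg : (Pc t - Pc t₀).natDegree < d := by
      by_cases h0 : Pc t - Pc t₀ = 0
      · rw [h0, natDegree_zero]; omega
      · rw [natDegree_lt_iff_degree_lt h0]
        have hdeq : (Pc t).degree = (Pc t₀).degree := by
          rw [degree_eq_natDegree (Pcne t), degree_eq_natDegree (Pcne t₀), Pcd t, Pcd t₀]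
        have hlt := degree_sub_lt hdeq (Pcne t)
          (by rw [(Pcm t).leadingCoeff, (Pcm t₀).leadingCoeff])
        rw [degree_eq_natDegree (Pcne t), Pcd t] at hlt
        exact_mod_cast hlt
    have hEv : (Pc t - Pc t₀).eval w = ∑ i ∈ Finset.range d, (Pc t - Pc t₀).coeff i * w ^ i :=
      eval_eq_sum_range' hDdeg w
    have hnormle : ‖(Pc t - Pc t₀).eval w‖ ≤
        ∑ i ∈ Finset.range d, |(P t).coeff i - (P t₀).coeff i| * B ^ i := by
      rw [hEv]
      refine (norm_sum_le _ _).trans (Finset.sum_le_sum fun i _ => ?_)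
      rw [norm_mul, norm_pow, hDco i]
      exact mul_le_mul_of_nonneg_left (pow_le_pow_left₀ (norm_nonneg w) hw i) (abs_nonneg _)
    rw [eval_sub] at hnormle
    linarith
  have epow : (0:ℝ) < ε ^ d := pow_pos hε d
  have Hsmall : ∀ᶠ t in nhds t₀,
      (∑ i ∈ Finset.range d, |(P t).coeff i - (P t₀).coeff i| * B ^ i) < ε ^ d := by
    have hc : Continuous fun t => ∑ i ∈ Finset.range d, |(P t).coeff i - (P t₀).coeff i| * B ^ i :=
      continuous_finset_sum _ fun i _ => (((hcoeff i).sub continuous_const).abs).mul continuous_const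
    have h1 : Filter.Tendsto
        (fun t => ∑ i ∈ Finset.range d, |(P t).coeff i - (P t₀).coeff i| * B ^ i)
        (nhds t₀) (nhds 0) := by simpa using hc.tendsto t₀
    exact h1.eventually_lt_const epow
  have Hone : ∀ᶠ t in nhds t₀, |t - t₀| ≤ 1 := by
    have h1 : ∀ᶠ t in nhds t₀, dist t t₀ < 1 :=
      Metric.eventually_nhds_iff.mpr ⟨1, one_pos, fun {y} hy => hy⟩
    exact h1.mono fun t ht => by rw [Real.dist_eq] at ht; exact ht.le
  set T : Finset ℝ := (P t₀).roots.toFinset with hT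
  have hup : ∀ (s : ℝ) (x : ℝ), (P s).eval x = 0 → (Pc s).eval ((x:ℝ):ℂ) = 0 := by
    intro s x hx
    show ((P s).map (algebraMap ℝ ℂ)).eval ((x:ℝ):ℂ) = 0
    rw [aux_eval_c, hx, Complex.ofReal_zero]
  have hdown : ∀ (s : ℝ) (z : ℂ), z.im = 0 → (Pc s).eval z = 0 → (P s).eval z.re = 0 := by
    intro s z him0 hz
    have hzre : z = ((z.re : ℝ) : ℂ) := by apply Complex.ext <;> simp [him0]
    rw [hzre] at hz
    have h2 : (((P s).eval z.re : ℝ) : ℂ) = 0 := by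
      rw [← aux_eval_c]; exact hz
    exact_mod_cast h2
  have Hsign : ∀ᶠ t in nhds t₀, ∀ x ∈ T, ∃ y : ℝ, (P t).eval y = 0 ∧ |y - x| < ε := by
    rw [eventually_all_finset]
    intro x hx
    have hxr : (P t₀).eval x = 0 := (mem_roots (Pne t₀)).mp (Multiset.mem_toFinset.mp hx)
    have hxS : ((x:ℝ):ℂ) ∈ S := (memS _).mpr (hup t₀ x hxr)
    set g : Polynomial ℝ := (P t₀) /ₘ (X - C x) with hg
    have hfac : (X - C x) * g = P t₀ := mul_divByMonic_eq_iff_isRoot.mpr hxr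
    have hgne : ∀ y ∈ Set.Icc (x - ε/2) (x + ε/2), g.eval y ≠ 0 := by
      intro y hy hy0
      have hyroot : (P t₀).eval y = 0 := by rw [← hfac, eval_mul, hy0, mul_zero]
      by_cases hxy : y = x
      · subst hxy
        have hdvd : (X - C y) ^ 2 ∣ P t₀ := by
          obtain ⟨g', hg'⟩ := dvd_iff_isRoot.mpr hy0
          exact ⟨g', by rw [← hfac, hg', sq]; ring⟩
        have hdvd2 : (X - C ((y:ℝ):ℂ)) ^ 2 ∣ Pc t₀ := by
          have h3 := _root_.map_dvd (mapRingHom (algebraMap ℝ ℂ)) hdvd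
          simpa using h3
        have h2le : 2 ≤ rootMultiplicity ((y:ℝ):ℂ) (Pc t₀) :=
          (le_rootMultiplicity_iff (Pcne t₀)).mpr hdvd2
        have h4 : rootMultiplicity ((y:ℝ):ℂ) (Pc t₀) ≤ 1 := hsimple ((y:ℝ):ℂ)
        omega
      · have hyS : ((y:ℝ):ℂ) ∈ S := (memS _).mpr (hup t₀ y hyroot)
        have hne2 : ((y:ℝ):ℂ) ≠ ((x:ℝ):ℂ) := by exact_mod_cast hxy
        have hs3 := hsep _ hyS _ hxS hne2
        have hnorm : ‖((y:ℝ):ℂ) - ((x:ℝ):ℂ)‖ = |y - x| := by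
          rw [← Complex.ofReal_sub, Complex.norm_real, Real.norm_eq_abs]
        rw [hnorm] at hs3
        have habs : |y - x| ≤ ε/2 := by
          rw [abs_le]; rcases hy with ⟨h1, h2⟩; constructor <;> linarith
        linarith
    have hle : x - ε/2 ≤ x + ε/2 := by linarith
    have hgsame : 0 < g.eval (x - ε/2) * g.eval (x + ε/2) := by
      rcases lt_trichotomy (g.eval (x - ε/2) * g.eval (x + ε/2)) 0 with h | h | h
      · obtain ⟨y, hy, hy0⟩ := aux_exists_root_of_sign g.continuous hle h
        exact absurd hy0 (hgne y hy)
      · rcases mul_eq_zero.mp h with h' | h'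
        · exact absurd h' (hgne _ ⟨le_refl _, by linarith⟩)
        · exact absurd h' (hgne _ ⟨by linarith, le_refl _⟩)
      · exact h
    have hA : (P t₀).eval (x - ε/2) = (-(ε/2)) * g.eval (x - ε/2) := by
      rw [← hfac, eval_mul, eval_sub, eval_X, eval_C]; ring
    have hBv : (P t₀).eval (x + ε/2) = (ε/2) * g.eval (x + ε/2) := by
      rw [← hfac, eval_mul, eval_sub, eval_X, eval_C]; ring
    have hprod : (P t₀).eval (x - ε/2) * (P t₀).eval (x + ε/2) < 0 := by
      rw [hA, hBv]
      nlinarith [mul_pos (by positivity : (0:ℝ) < (ε/2) * (ε/2)) hgsame]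
    have htend : Filter.Tendsto (fun t => (P t).eval (x - ε/2) * (P t).eval (x + ε/2))
        (nhds t₀) (nhds ((P t₀).eval (x - ε/2) * (P t₀).eval (x + ε/2))) :=
      ((hevalcont _).mul (hevalcont _)).tendsto t₀
    refine (htend.eventually_lt_const hprod).mono fun t ht => ?_
    obtain ⟨y, hy, hy0⟩ := aux_exists_root_of_sign (P t).continuous hle ht
    refine ⟨y, hy0, ?_⟩
    rcases hy with ⟨h1, h2⟩
    rw [abs_lt]; constructor <;> linarith
  filter_upwards [Hsmall, Hone, Hsign] with t hsum hone hsig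
  have near1 : ∀ z ∈ (Pc t).roots, ∃ r ∈ S, ‖z - r‖ < ε := by
    intro z hz
    by_contra hcon
    push_neg at hcon
    have hz0 : (Pc t).eval z = 0 := (mem_roots (Pcne t)).mp hz
    have hzB : ‖z‖ ≤ B := hBroot t hone z hz
    have h1 : ‖(Pc t₀).eval z‖ < ε ^ d := by
      have h2 := hEvalDiff t hsum z hzB
      rwa [hz0, zero_sub, norm_neg] at h2
    have h2 : ε ^ d ≤ ‖(Pc t₀).eval z‖ := by
      rw [EP t₀ z, ← RtC t₀]
      exact aux_pow_card_le_prod _ _ ε hε.le fun r hr =>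
        hcon r (Multiset.mem_toFinset.mpr hr)
    linarith
  have near2 : ∀ r ∈ S, ∃ z ∈ (Pc t).roots, ‖z - r‖ < ε := by
    intro r hr
    by_contra hcon
    push_neg at hcon
    have hr0 : (Pc t₀).eval r = 0 := (memS r).mp hr
    have hrB : ‖r‖ ≤ B := hBroot t₀ (by simp) r (Multiset.mem_toFinset.mp hr)
    have h1 : ‖(Pc t).eval r‖ < ε ^ d := by
      have h2 := hEvalDiff t hsum r hrB
      rwa [hr0, sub_zero] at h2
    have h2 : ε ^ d ≤ ‖(Pc t).eval r‖ := by
      rw [EP t r, ← RtC t]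
      refine aux_pow_card_le_prod _ _ ε hε.le fun z hz => ?_
      rw [norm_sub_rev]
      exact hcon z hz
    linarith
  obtain ⟨n, hnmem, hndist⟩ : ∃ n : ℂ → ℂ, (∀ z ∈ (Pc t).roots, n z ∈ S) ∧
      (∀ z ∈ (Pc t).roots, ‖z - n z‖ < ε) := by
    choose f h1 h2 using near1
    refine ⟨fun z => if hz : z ∈ (Pc t).roots then f z hz else 0, ?_, ?_⟩
    · intro z hz; simp only [dif_pos hz]; exact h1 z hz
    · intro z hz; simp only [dif_pos hz]; exact h2 z hz
  have huniq : ∀ (z r r' : ℂ), r ∈ S → r' ∈ S → ‖z - r‖ < ε → ‖z - r'‖ < ε → r = r' := by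
    intro z r r' hr hr' h1 h2
    by_contra hne
    have hkey : r - r' = (z - r') - (z - r) := by ring
    have h3 : ‖r - r'‖ ≤ ‖z - r'‖ + ‖z - r‖ := by
      rw [hkey]; exact norm_sub_le _ _
    linarith [hsep r hr r' hr' hne]
  have hge1 : ∀ r ∈ S, 1 ≤ Multiset.count r ((Pc t).roots.map n) := by
    intro r hr
    obtain ⟨z, hz, hzr⟩ := near2 r hr
    have heq : n z = r := huniq z (n z) r (hnmem z hz) hr (hndist z hz) hzr
    exact Multiset.one_le_count_iff_mem.mpr (Multiset.mem_map.mpr ⟨z, hz, heq⟩)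
  have hsumcount : ∑ r ∈ S, Multiset.count r ((Pc t).roots.map n) = d := by
    have hsub : ((Pc t).roots.map n).toFinset ⊆ S := by
      intro u hu
      obtain ⟨z, hz, rfl⟩ := Multiset.mem_map.mp (Multiset.mem_toFinset.mp hu)
      exact hnmem z hz
    have hzero : ∀ x ∈ S, x ∉ ((Pc t).roots.map n).toFinset →
        Multiset.count x ((Pc t).roots.map n) = 0 := fun x _ hx =>
      Multiset.count_eq_zero.mpr fun hc => hx (Multiset.mem_toFinset.mpr hc)
    rw [← Finset.sum_subset hsub hzero, Multiset.toFinset_sum_count_eq,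
      Multiset.card_map, RtC t]
  have count1 : ∀ r ∈ S, Multiset.count r ((Pc t).roots.map n) = 1 := by
    intro r hr
    have heq : ∑ _r ∈ S, (1:ℕ) = ∑ r ∈ S, Multiset.count r ((Pc t).roots.map n) := by
      rw [Finset.sum_const, smul_eq_mul, mul_one, hScard, hsumcount]
    exact ((Finset.sum_eq_sum_iff_of_le hge1).mp heq r hr).symm
  have hrealS : ∀ x : ℝ, x ∈ (P t).roots.toFinset →
      ((x:ℝ):ℂ) ∈ (Pc t).roots ∧ n ((x:ℝ):ℂ) ∈ S ∧ (n ((x:ℝ):ℂ)).im = 0 := by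
    intro x hx
    have hxr : (P t).eval x = 0 := (mem_roots (Pne t)).mp (Multiset.mem_toFinset.mp hx)
    have hxc : ((x:ℝ):ℂ) ∈ (Pc t).roots := (mem_roots (Pcne t)).mpr (hup t x hxr)
    have hnS := hnmem _ hxc
    refine ⟨hxc, hnS, ?_⟩
    by_contra h0
    have h1 := him _ hnS h0
    have h2 := Complex.abs_im_le_norm (((x:ℝ):ℂ) - n ((x:ℝ):ℂ))
    have h3 : ((((x:ℝ):ℂ)) - n ((x:ℝ):ℂ)).im = -(n ((x:ℝ):ℂ)).im := by simp
    rw [h3, abs_neg] at h2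
    have h4 := hndist _ hxc
    linarith
  refine Finset.card_bij (fun x _ => (n ((x:ℝ):ℂ)).re) ?_ ?_ ?_
  · intro x hx
    obtain ⟨hxc, hnS, him0⟩ := hrealS x hx
    have hroot0 : (Pc t₀).eval (n ((x:ℝ):ℂ)) = 0 := (memS _).mp hnS
    have h5 : (P t₀).eval ((n ((x:ℝ):ℂ)).re) = 0 := hdown t₀ _ him0 hroot0
    exact Multiset.mem_toFinset.mpr ((mem_roots (Pne t₀)).mpr h5)
  · intro x hx y hy hxy
    by_contra hne
    obtain ⟨hxc, hnxS, himx⟩ := hrealS x hx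
    obtain ⟨hyc, hnyS, himy⟩ := hrealS y hy
    have hxyc : ((x:ℝ):ℂ) ≠ ((y:ℝ):ℂ) := by exact_mod_cast hne
    have heqn : n ((x:ℝ):ℂ) = n ((y:ℝ):ℂ) := by
      apply Complex.ext
      · exact hxy
      · rw [himx, himy]
    have hcount := count1 _ hnxS
    rw [Multiset.count_map] at hcount
    have hxin : ((x:ℝ):ℂ) ∈ Multiset.filter (fun a => n ((x:ℝ):ℂ) = n a) (Pc t).roots :=
      Multiset.mem_filter.mpr ⟨hxc, rfl⟩
    have hyin : ((y:ℝ):ℂ) ∈ Multiset.filter (fun a => n ((x:ℝ):ℂ) = n a) (Pc t).roots :=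
      Multiset.mem_filter.mpr ⟨hyc, heqn⟩
    have hsub2 : ({((x:ℝ):ℂ), ((y:ℝ):ℂ)} : Finset ℂ) ⊆
        (Multiset.filter (fun a => n ((x:ℝ):ℂ) = n a) (Pc t).roots).toFinset := by
      intro u hu
      rcases Finset.mem_insert.mp hu with rfl | hu
      · exact Multiset.mem_toFinset.mpr hxin
      · rw [Finset.mem_singleton.mp hu]; exact Multiset.mem_toFinset.mpr hyin
    have hcard2 : ({((x:ℝ):ℂ), ((y:ℝ):ℂ)} : Finset ℂ).card = 2 := Finset.card_pair hxyc
    have h2le : 2 ≤ Multiset.card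
        (Multiset.filter (fun a => n ((x:ℝ):ℂ) = n a) (Pc t).roots) := by
      calc 2 = ({((x:ℝ):ℂ), ((y:ℝ):ℂ)} : Finset ℂ).card := hcard2.symm
        _ ≤ _ := Finset.card_le_card hsub2
        _ ≤ _ := Multiset.toFinset_card_le _
    omega
  · intro b hb
    obtain ⟨y, hy0, hyd⟩ := hsig b hb
    have hyT : y ∈ (P t).roots.toFinset :=
      Multiset.mem_toFinset.mpr ((mem_roots (Pne t)).mpr hy0)
    refine ⟨y, hyT, ?_⟩
    have hyc : ((y:ℝ):ℂ) ∈ (Pc t).roots := (mem_roots (Pcne t)).mpr (hup t y hy0)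
    have hbS : ((b:ℝ):ℂ) ∈ S := by
      have hbr : (P t₀).eval b = 0 := (mem_roots (Pne t₀)).mp (Multiset.mem_toFinset.mp hb)
      exact (memS _).mpr (hup t₀ b hbr)
    have hdistb : ‖((y:ℝ):ℂ) - ((b:ℝ):ℂ)‖ < ε := by
      rw [← Complex.ofReal_sub, Complex.norm_real, Real.norm_eq_abs]; exact hyd
    have heq : n ((y:ℝ):ℂ) = ((b:ℝ):ℂ) :=
      huniq ((y:ℝ):ℂ) _ _ (hnmem _ hyc) hbS (hndist _ hyc) hdistb
    show (n ((y:ℝ):ℂ)).re = b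
    rw [heq]
    simp

/-- If a parametric monic polynomial `q ∈ ℝ[t][X]` of degree `d` in `X` has,
at `t₀`, only simple complex roots, then the number of distinct real roots of
`q(t, ·)` is constant in a neighborhood of `t₀`. -/
theorem real_root_count_locally_constant_at_simple
    (q : Polynomial (Polynomial ℝ)) (d : ℕ) (hd : 1 ≤ d)
    (hmonic : q.Monic) (hdeg : q.natDegree = d) (t₀ : ℝ)
    (hsimple : ∀ z : ℂ,
      ((q.map (Polynomial.evalRingHom t₀)).map (algebraMap ℝ ℂ)).rootMultiplicity z ≤ 1) :
    ∃ ε > 0, ∀ t : ℝ, |t - t₀| < ε →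
      (q.map (Polynomial.evalRingHom t)).roots.toFinset.card =
      (q.map (Polynomial.evalRingHom t₀)).roots.toFinset.card := by
  have H := aux_main (fun t => q.map (evalRingHom t)) d hd
    (fun t => hmonic.map _)
    (fun t => by rw [hmonic.natDegree_map, hdeg])
    (fun i => (Polynomial.continuous (q.coeff i)).congr fun t => by simp [coeff_map])
    (fun a => (Polynomial.continuous (q.eval (C a))).congr fun t => (aux_eval_param q t a).symm)
    t₀ hsimple
  rw [Metric.eventually_nhds_iff] at H
  obtain ⟨δ, hδ, h⟩ := H
  exact ⟨δ, hδ, fun t ht => h (by rwa [Real.dist_eq])⟩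
end
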